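/- Let λ ∈ ℝ, set μ_j := −j⁴π⁴ + λ j²π², and let a ∈ ℝ with a ∉ 𝒩₁. Suppose (c_j)_{j≥1} is a bounded sequence of complex numbers such that, for every positive integer j, the series ∑_{k≥1, k≠j} c_k / (a + μ_k − μ_j) converges absolutely and c_j + a · ∑_{k≥1, k≠j} c_k / (a + μ_k − μ_j) = 1. Then there exists a constant C > 0 such that |c_j − 1| ≤ C (1 + log j) / j³ for every positive integer j. -/

import Mathlib

open Real

open Real Finset

lemma sum_inv_sub_le_harmonic (j : ℕ) :
    ∑ k ∈ Finset.Ico 1 j, ((j:ℝ) - k)⁻¹ ≤ (harmonic j : ℝ) := by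
  have h1 : ∑ k ∈ Finset.Ico 1 j, ((j:ℝ) - k)⁻¹ = ∑ i ∈ Finset.Ico 1 j, ((i:ℝ))⁻¹ := by
    refine Finset.sum_nbij' (fun k => j - k) (fun i => j - i) ?_ ?_ ?_ ?_ ?_
    · intro a ha; simp only [Finset.mem_Ico] at *; omega
    · intro a ha; simp only [Finset.mem_Ico] at *; omega
    · intro a ha; simp only [Finset.mem_Ico] at ha; omega
    · intro a ha; simp only [Finset.mem_Ico] at ha; omega
    · intro a ha; simp only [Finset.mem_Ico] at ha
      rw [Nat.cast_sub (by omega)]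
  rw [h1]
  have h2 : (harmonic j : ℝ) = ∑ i ∈ Finset.Icc 1 j, ((i:ℝ))⁻¹ := by
    rw [harmonic_eq_sum_Icc]; push_cast; rfl
  rw [h2]
  apply Finset.sum_le_sum_of_subset_of_nonneg
  · intro x hx; simp only [Finset.mem_Ico, Finset.mem_Icc] at *; omega
  · intro i _ _; positivity

lemma sum_inv_sub_le_harmonic' (j : ℕ) :
    ∑ k ∈ Finset.Ioc j (2*j), ((k:ℝ) - j)⁻¹ ≤ (harmonic j : ℝ) := by
  have h1 : ∑ k ∈ Finset.Ioc j (2*j), ((k:ℝ) - j)⁻¹ = ∑ i ∈ Finset.Icc 1 j, ((i:ℝ))⁻¹ := by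
    refine Finset.sum_nbij' (fun k => k - j) (fun i => i + j) ?_ ?_ ?_ ?_ ?_
    · intro a ha; simp only [Finset.mem_Ioc, Finset.mem_Icc] at *; omega
    · intro a ha; simp only [Finset.mem_Ioc, Finset.mem_Icc] at *; omega
    · intro a ha; simp only [Finset.mem_Ioc] at ha; omega
    · intro a ha; simp only [Finset.mem_Icc] at ha; omega
    · intro a ha; simp only [Finset.mem_Ioc] at ha
      rw [Nat.cast_sub (by omega)]
  rw [h1]
  rw [show (harmonic j : ℝ) = ∑ i ∈ Finset.Icc 1 j, ((i:ℝ))⁻¹ by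
    rw [harmonic_eq_sum_Icc]; push_cast; rfl]

lemma abs_sub_ge_one (j k : ℕ) (h : k ≠ j) : (1:ℝ) ≤ |(k:ℝ) - j| := by
  rcases lt_or_gt_of_ne h with h' | h'
  · have hk1 : (k:ℝ) + 1 ≤ j := by exact_mod_cast h'
    rw [abs_sub_comm, abs_of_pos (by linarith)]; linarith
  · have hj1 : (j:ℝ) + 1 ≤ k := by exact_mod_cast h'
    rw [abs_of_pos (by linarith)]; linarith

lemma core_sum (j : ℕ) (hj : 1 ≤ j) (s : Finset ℕ) (hs : ∀ k ∈ s, 1 ≤ k ∧ k ≠ j) :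
    ∑ k ∈ s, (|(k:ℝ) - j| * ((k:ℝ) + j)^3)⁻¹ ≤ 3 * (1 + Real.log j) / (j:ℝ)^3 := by
  have hj0 : (0:ℝ) < j := by exact_mod_cast hj
  have hlog : 0 ≤ Real.log j := Real.log_nonneg (by exact_mod_cast hj)
  have hL : (1:ℝ) ≤ 1 + Real.log j := by linarith
  rw [← Finset.sum_filter_add_sum_filter_not s (fun k => k ≤ 2*j)]
  have part1 : ∑ k ∈ s.filter (fun k => k ≤ 2*j), (|(k:ℝ) - j| * ((k:ℝ) + j)^3)⁻¹
      ≤ ((j:ℝ)^3)⁻¹ * (2 * (1 + Real.log j)) := by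
    have step1 : ∑ k ∈ s.filter (fun k => k ≤ 2*j), (|(k:ℝ) - j| * ((k:ℝ) + j)^3)⁻¹
        ≤ ∑ k ∈ s.filter (fun k => k ≤ 2*j), ((j:ℝ)^3)⁻¹ * |(k:ℝ) - j|⁻¹ := by
      refine Finset.sum_le_sum ?_
      intro k hk
      simp only [Finset.mem_filter] at hk
      obtain ⟨hk1, hkj⟩ := hs k hk.1
      have h1 : (1:ℝ) ≤ |(k:ℝ) - j| := abs_sub_ge_one j k hkj
      have h2 : (j:ℝ)^3 ≤ ((k:ℝ) + j)^3 := by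
        have h3 : (j:ℝ) ≤ (k:ℝ) + j := by
          have : (0:ℝ) ≤ (k:ℝ) := Nat.cast_nonneg k
          linarith
        have : (0:ℝ) ≤ (j:ℝ) := le_of_lt hj0
        gcongr
      calc (|(k:ℝ) - j| * ((k:ℝ) + j)^3)⁻¹
          = (((k:ℝ) + j)^3)⁻¹ * |(k:ℝ) - j|⁻¹ := by rw [mul_inv]; ring
        _ ≤ ((j:ℝ)^3)⁻¹ * |(k:ℝ) - j|⁻¹ := by
            refine mul_le_mul_of_nonneg_right (inv_anti₀ (by positivity) h2) ?_
            positivity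
    refine step1.trans ?_
    rw [← Finset.mul_sum]
    refine mul_le_mul_of_nonneg_left ?_ (by positivity)
    have hsub : s.filter (fun k => k ≤ 2*j) ⊆ (Finset.Icc 1 (2*j)).erase j := by
      intro k hk
      simp only [Finset.mem_filter] at hk
      obtain ⟨hk1, hkj⟩ := hs k hk.1
      simp only [Finset.mem_erase, Finset.mem_Icc]
      exact ⟨hkj, hk1, hk.2⟩
    have step2 : ∑ k ∈ s.filter (fun k => k ≤ 2*j), |(k:ℝ) - j|⁻¹
        ≤ ∑ k ∈ (Finset.Icc 1 (2*j)).erase j, |(k:ℝ) - j|⁻¹ := by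
      refine Finset.sum_le_sum_of_subset_of_nonneg hsub ?_
      intro k _ _; positivity
    refine step2.trans ?_
    have hsplit : (Finset.Icc 1 (2*j)).erase j = Finset.Ico 1 j ∪ Finset.Ioc j (2*j) := by
      ext x
      simp only [Finset.mem_erase, Finset.mem_Icc, Finset.mem_union, Finset.mem_Ico,
        Finset.mem_Ioc]
      omega
    rw [hsplit, Finset.sum_union (by
      rw [Finset.disjoint_left]
      intro x hx hx'
      simp only [Finset.mem_Ico, Finset.mem_Ioc] at *
      omega)]
    have hA : ∑ k ∈ Finset.Ico 1 j, |(k:ℝ) - j|⁻¹ = ∑ k ∈ Finset.Ico 1 j, ((j:ℝ) - k)⁻¹ := by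
      refine Finset.sum_congr rfl ?_
      intro k hk
      simp only [Finset.mem_Ico] at hk
      have : (k:ℝ) < j := by exact_mod_cast hk.2
      rw [abs_sub_comm, abs_of_pos (by linarith)]
    have hB : ∑ k ∈ Finset.Ioc j (2*j), |(k:ℝ) - j|⁻¹
        = ∑ k ∈ Finset.Ioc j (2*j), ((k:ℝ) - j)⁻¹ := by
      refine Finset.sum_congr rfl ?_
      intro k hk
      simp only [Finset.mem_Ioc] at hk
      have : (j:ℝ) < k := by exact_mod_cast hk.1
      rw [abs_of_pos (by linarith)]
    rw [hA, hB]
    have hh := harmonic_le_one_add_log j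
    have h1 := sum_inv_sub_le_harmonic j
    have h2 := sum_inv_sub_le_harmonic' j
    linarith
  have part2 : ∑ k ∈ s.filter (fun k => ¬ k ≤ 2*j), (|(k:ℝ) - j| * ((k:ℝ) + j)^3)⁻¹
      ≤ ((j:ℝ)^3)⁻¹ * (1 + Real.log j) := by
    have step1 : ∑ k ∈ s.filter (fun k => ¬ k ≤ 2*j), (|(k:ℝ) - j| * ((k:ℝ) + j)^3)⁻¹
        ≤ ∑ k ∈ s.filter (fun k => ¬ k ≤ 2*j), (4*(j:ℝ)^2)⁻¹ * (((k:ℝ))^2)⁻¹ := by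
      refine Finset.sum_le_sum ?_
      intro k hk
      simp only [Finset.mem_filter, not_le] at hk
      have hx : (2:ℝ)*(j:ℝ) + 1 ≤ (k:ℝ) := by exact_mod_cast hk.2
      have hy1 : (1:ℝ) ≤ (j:ℝ) := by exact_mod_cast hj
      set x := (k:ℝ) with hxdef
      set y := (j:ℝ) with hydef
      have hx0 : (0:ℝ) < x := by linarith
      have hy0 : (0:ℝ) < y := by linarith
      have habs : |x - y| = x - y := abs_of_pos (by linarith)
      have e1 : 4*x*y ≤ (x+y)^2 := by nlinarith [sq_nonneg (x-y)]
      have e2 : x*(4*x*y) ≤ (x+y)*(x+y)^2 := by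
        refine mul_le_mul (by linarith) e1 (by positivity) (by linarith)
      have e4 : y ≤ x - y := by linarith
      have hkey : 4*y^2*x^2 ≤ |x - y| * (x + y)^3 := by
        rw [habs]
        calc 4*y^2*x^2 = y * (x*(4*x*y)) := by ring
          _ ≤ (x-y) * ((x+y)*(x+y)^2) := by
              refine mul_le_mul e4 e2 (by positivity) (by linarith)
          _ = (x-y) * (x+y)^3 := by ring
      calc (|x - y| * (x + y)^3)⁻¹ ≤ (4*y^2*x^2)⁻¹ := by
            refine inv_anti₀ (by positivity) hkey
        _ = (4*y^2)⁻¹ * (x^2)⁻¹ := by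
            rw [show 4*y^2*x^2 = (4*y^2)*(x^2) by ring, mul_inv]
    refine step1.trans ?_
    rw [← Finset.mul_sum]
    have hsum2 : ∑ k ∈ s.filter (fun k => ¬ k ≤ 2*j), (((k:ℝ))^2)⁻¹ ≤ ((2*j:ℕ):ℝ)⁻¹ := by
      rcases (s.filter (fun k => ¬ k ≤ 2*j)).eq_empty_or_nonempty with he | hne
      · rw [he, Finset.sum_empty]; positivity
      · set t := s.filter (fun k => ¬ k ≤ 2*j) with htdef
        set N := t.max' hne with hNdef
        have hNt : N ∈ t := t.max'_mem hne
        have hN : 2*j < N := by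
          have := (Finset.mem_filter.mp hNt).2
          omega
        have hsub : t ⊆ Finset.Ioc (2*j) N := by
          intro k hk
          have h1 : ¬ k ≤ 2*j := (Finset.mem_filter.mp hk).2
          have h2 := Finset.le_max' t k hk
          simp only [Finset.mem_Ioc]; omega
        calc ∑ k ∈ t, (((k:ℝ))^2)⁻¹ ≤ ∑ k ∈ Finset.Ioc (2*j) N, (((k:ℝ))^2)⁻¹ := by
              refine Finset.sum_le_sum_of_subset_of_nonneg hsub ?_
              intro k _ _; positivity
          _ ≤ ((2*j:ℕ):ℝ)⁻¹ - ((N:ℕ):ℝ)⁻¹ := sum_Ioc_inv_sq_le_sub (by omega) (le_of_lt hN)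
          _ ≤ ((2*j:ℕ):ℝ)⁻¹ := by
              have : (0:ℝ) ≤ ((N:ℕ):ℝ)⁻¹ := by positivity
              linarith
    have h2j : ((2*j:ℕ):ℝ) = 2*(j:ℝ) := by push_cast; ring
    calc (4*(j:ℝ)^2)⁻¹ * ∑ k ∈ s.filter (fun k => ¬ k ≤ 2*j), (((k:ℝ))^2)⁻¹
        ≤ (4*(j:ℝ)^2)⁻¹ * (2*(j:ℝ))⁻¹ := by
          refine mul_le_mul_of_nonneg_left ?_ (by positivity)
          rw [← h2j]; exact hsum2
      _ = (8*(j:ℝ)^3)⁻¹ := by rw [← mul_inv]; ring_nf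
      _ ≤ ((j:ℝ)^3)⁻¹ * (1 + Real.log j) := by
          have h8 : (8*(j:ℝ)^3)⁻¹ ≤ ((j:ℝ)^3)⁻¹ := by
            refine inv_anti₀ (by positivity) (by nlinarith [pow_pos hj0 3])
          nlinarith [inv_nonneg.mpr (le_of_lt (by positivity : (0:ℝ) < (j:ℝ)^3))]
  have hfin : 3 * (1 + Real.log j) / (j:ℝ)^3
      = ((j:ℝ)^3)⁻¹ * (2 * (1 + Real.log j)) + ((j:ℝ)^3)⁻¹ * (1 + Real.log j) := by
    field_simp; ring
  rw [hfin]
  exact add_le_add part1 part2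

lemma denom_lb (lam a : ℝ) (j k : ℕ) (hk1 : 1 ≤ k) (hk : k ≠ j)
    (hjbig : |a| + |lam| + 1 ≤ (j:ℝ)) :
    |(k:ℝ) - j| * ((k:ℝ) + j)^3
      ≤ |a + (-(k:ℝ)^4*π^4 + lam*(k:ℝ)^2*π^2) - (-(j:ℝ)^4*π^4 + lam*(j:ℝ)^2*π^2)| := by
  have hx1 : (1:ℝ) ≤ (k:ℝ) := by exact_mod_cast hk1
  set x := (k:ℝ) with hxdef
  set y := (j:ℝ) with hydef
  have hy1 : (1:ℝ) ≤ y := by have := abs_nonneg a; have := abs_nonneg lam; linarith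
  have habs1 : (1:ℝ) ≤ |x - y| := abs_sub_ge_one j k hk
  have hpi2 : (9:ℝ) ≤ π^2 := by nlinarith [Real.pi_gt_three]
  have hylam : |lam| + 1 ≤ y := by have := abs_nonneg a; linarith
  have hya : |a| + 1 ≤ y := by have := abs_nonneg lam; linarith
  set Q := (x^2 - y^2)*(π^2*(x^2+y^2) - lam) with hQdef
  have hid : a + (-x^4*π^4 + lam*x^2*π^2) - (-y^4*π^4 + lam*y^2*π^2) = a - π^2*Q := by
    rw [hQdef]; ring
  set R := |x - y| * (x + y)^3 with hRdef
  -- lower bounds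
  have h1 : 2*|lam| ≤ π^2*(x^2+y^2) := by nlinarith [sq_nonneg x, abs_nonneg lam]
  have h2 : π^2*(x^2+y^2)/2 ≤ π^2*(x^2+y^2) - lam := by
    have := le_abs_self lam; linarith
  have hpos : (0:ℝ) ≤ π^2*(x^2+y^2) - lam := by nlinarith [sq_nonneg x, sq_nonneg y]
  have hs1 : (x+y)^2/2 ≤ x^2+y^2 := by nlinarith [sq_nonneg (x-y)]
  have hs4 : π^2*(x+y)^2/4 ≤ π^2*(x^2+y^2) - lam := by
    have := mul_le_mul_of_nonneg_left hs1 (sq_nonneg π)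
    linarith
  have hc : (π^2/4)*(x+y)^3 ≤ (x+y)*(π^2*(x^2+y^2) - lam) := by
    have hxy0 : (0:ℝ) ≤ x + y := by linarith
    calc (π^2/4)*(x+y)^3 = (x+y)*(π^2*(x+y)^2/4) := by ring
      _ ≤ (x+y)*(π^2*(x^2+y^2) - lam) := mul_le_mul_of_nonneg_left hs4 hxy0
  have hQabs : |Q| = |x - y| * ((x+y)*(π^2*(x^2+y^2) - lam)) := by
    have hQeq : Q = (x-y)*((x+y)*(π^2*(x^2+y^2) - lam)) := by rw [hQdef]; ring
    rw [hQeq, abs_mul]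
    congr 1
    exact abs_of_nonneg (mul_nonneg (by linarith) hpos)
  have hQ : (π^2/4) * R ≤ |Q| := by
    rw [hQabs, hRdef]
    calc (π^2/4) * (|x - y| * (x+y)^3) = |x - y| * ((π^2/4)*(x+y)^3) := by ring
      _ ≤ |x - y| * ((x+y)*(π^2*(x^2+y^2) - lam)) :=
          mul_le_mul_of_nonneg_left hc (abs_nonneg _)
  have hR0 : (0:ℝ) ≤ R := by
    rw [hRdef]; positivity
  have hP : 20 * R ≤ π^2 * |Q| := by
    have h6 := mul_le_mul_of_nonneg_left hQ (sq_nonneg π)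
    have h7 : (81:ℝ) ≤ π^2*π^2 := by
      have := mul_le_mul hpi2 hpi2 (by norm_num) (sq_nonneg π)
      linarith
    have h8 : 20*R ≤ (π^2*π^2/4)*R := by
      have h9 := mul_le_mul_of_nonneg_right h7 hR0
      linarith
    have h10 : π^2*((π^2/4)*R) = (π^2*π^2/4)*R := by ring
    linarith
  have hRy : y ≤ R := by
    have h3 : (x+y)^3 ≤ R := by
      rw [hRdef]
      exact le_mul_of_one_le_left (by positivity) habs1
    have hxy : (1:ℝ) ≤ x + y := by linarith
    have h5 : x + y ≤ (x+y)^3 := le_self_pow₀ hxy (by norm_num)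
    linarith
  have htri : π^2*|Q| - |a| ≤ |a - π^2*Q| := by
    have h4 := abs_sub_abs_le_abs_sub (π^2*Q) a
    rw [abs_sub_comm] at h4
    have h5 : |π^2*Q| = π^2*|Q| := by
      rw [abs_mul, abs_of_nonneg (sq_nonneg π)]
    linarith
  rw [hid]
  have : R ≤ π^2*|Q| - |a| := by linarith
  linarith

/-- With μ_j := −j⁴π⁴ + λj²π² and a ∉ 𝒩₁, if (c_j) is a bounded sequence of complex
numbers satisfying c_j + a·∑_{k≠j} c_k/(a + μ_k − μ_j) = 1 (with the series converging
absolutely) for every j, then |c_j − 1| ≤ C(1 + log j)/j³ for some C > 0. -/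
theorem stmt13 (lam a : ℝ)
    (ha : a ∉ {x : ℝ | ∃ j k : ℕ+,
      x = (-(k : ℝ) ^ 4 * π ^ 4 + lam * (k : ℝ) ^ 2 * π ^ 2)
        - (-(j : ℝ) ^ 4 * π ^ 4 + lam * (j : ℝ) ^ 2 * π ^ 2)})
    (c : ℕ+ → ℂ) (M : ℝ) (hM : ∀ j : ℕ+, ‖c j‖ ≤ M)
    (hsum : ∀ j : ℕ+, Summable (fun k : {k : ℕ+ // k ≠ j} =>
      ‖c k / ((a + (-((k : ℕ+) : ℝ) ^ 4 * π ^ 4 + lam * ((k : ℕ+) : ℝ) ^ 2 * π ^ 2)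
        - (-(j : ℝ) ^ 4 * π ^ 4 + lam * (j : ℝ) ^ 2 * π ^ 2) : ℝ) : ℂ)‖))
    (heq : ∀ j : ℕ+, c j + (a : ℂ) *
      (∑' k : {k : ℕ+ // k ≠ j},
        c k / ((a + (-((k : ℕ+) : ℝ) ^ 4 * π ^ 4 + lam * ((k : ℕ+) : ℝ) ^ 2 * π ^ 2)
          - (-(j : ℝ) ^ 4 * π ^ 4 + lam * (j : ℝ) ^ 2 * π ^ 2) : ℝ) : ℂ)) = 1) :
    ∃ C > (0 : ℝ), ∀ j : ℕ+,
      ‖c j - 1‖ ≤ C * (1 + Real.log (j : ℝ)) / (j : ℝ) ^ 3 := by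
  have hM0 : 0 ≤ M := le_trans (norm_nonneg _) (hM 1)
  have hB0 : (1:ℝ) ≤ |a| + |lam| + 1 := by
    have := abs_nonneg a; have := abs_nonneg lam; linarith
  set B : ℝ := |a| + |lam| + 1 with hBdef
  set C : ℝ := (M+1)*B^3 + 3 * |a| * M + 1 with hCdef
  have ht1 : 0 ≤ (M+1)*B^3 := mul_nonneg (by linarith) (by positivity)
  have ht2 : 0 ≤ 3 * |a| * M := mul_nonneg (mul_nonneg (by norm_num) (abs_nonneg a)) hM0
  have hC0 : 0 < C := by rw [hCdef]; linarith
  refine ⟨C, hC0, ?_⟩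
  intro j
  have hjr1 : (1:ℝ) ≤ ((j:ℕ):ℝ) := by exact_mod_cast j.one_le
  have hlog0 : (0:ℝ) ≤ Real.log ((j:ℕ):ℝ) := Real.log_nonneg hjr1
  have hj3 : (0:ℝ) < ((j:ℕ):ℝ)^3 := by positivity
  show ‖c j - 1‖ ≤ C * (1 + Real.log ((j:ℕ):ℝ)) / ((j:ℕ):ℝ) ^ 3
  by_cases hbig : B ≤ ((j:ℕ):ℝ)
  · -- large j
    have heqj := heq j
    set T := ∑' k : {k : ℕ+ // k ≠ j},
        c k / ((a + (-((k : ℕ+) : ℝ) ^ 4 * π ^ 4 + lam * ((k : ℕ+) : ℝ) ^ 2 * π ^ 2)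
          - (-(j : ℝ) ^ 4 * π ^ 4 + lam * (j : ℝ) ^ 2 * π ^ 2) : ℝ) : ℂ) with hTdef
    have hsub : c j - 1 = -((a:ℂ) * T) := by linear_combination heqj
    have hnorm1 : ‖c j - 1‖ = |a| * ‖T‖ := by
      rw [hsub, norm_neg, norm_mul, Complex.norm_real, Real.norm_eq_abs]
    have hTle : ‖T‖ ≤ ∑' k : {k : ℕ+ // k ≠ j},
        ‖c k / ((a + (-((k : ℕ+) : ℝ) ^ 4 * π ^ 4 + lam * ((k : ℕ+) : ℝ) ^ 2 * π ^ 2)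
          - (-(j : ℝ) ^ 4 * π ^ 4 + lam * (j : ℝ) ^ 2 * π ^ 2) : ℝ) : ℂ)‖ :=
      norm_tsum_le_tsum_norm (hsum j)
    have hkey : ∑' k : {k : ℕ+ // k ≠ j},
        ‖c k / ((a + (-((k : ℕ+) : ℝ) ^ 4 * π ^ 4 + lam * ((k : ℕ+) : ℝ) ^ 2 * π ^ 2)
          - (-(j : ℝ) ^ 4 * π ^ 4 + lam * (j : ℝ) ^ 2 * π ^ 2) : ℝ) : ℂ)‖
        ≤ M * (3 * (1 + Real.log ((j:ℕ):ℝ)) / ((j:ℕ):ℝ)^3) := by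
      refine (hsum j).tsum_le_of_sum_le ?_
      intro t
      have stepA : ∑ k ∈ t,
          ‖c k / ((a + (-((k : ℕ+) : ℝ) ^ 4 * π ^ 4 + lam * ((k : ℕ+) : ℝ) ^ 2 * π ^ 2)
            - (-(j : ℝ) ^ 4 * π ^ 4 + lam * (j : ℝ) ^ 2 * π ^ 2) : ℝ) : ℂ)‖
          ≤ ∑ k ∈ t, M * ((|((((k:ℕ+):ℕ)):ℝ) - ((j:ℕ):ℝ)|
              * (((((k:ℕ+):ℕ)):ℝ) + ((j:ℕ):ℝ))^3)⁻¹) := by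
        refine Finset.sum_le_sum ?_
        intro k _
        have hkj : (((k:ℕ+)):ℕ) ≠ (j:ℕ) := by exact_mod_cast k.2
        have hk1 : 1 ≤ (((k:ℕ+)):ℕ) := (k:ℕ+).property
        have hlb := denom_lb lam a (j:ℕ) (((k:ℕ+)):ℕ) hk1 hkj hbig
        have hge1 := abs_sub_ge_one (j:ℕ) (((k:ℕ+)):ℕ) hkj
        have hRpos : 0 < |((((k:ℕ+):ℕ)):ℝ) - ((j:ℕ):ℝ)|
            * (((((k:ℕ+):ℕ)):ℝ) + ((j:ℕ):ℝ))^3 := by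
          refine mul_pos (lt_of_lt_of_le one_pos hge1) (pow_pos (by positivity) 3)
        calc ‖c k / ((a + (-((k : ℕ+) : ℝ) ^ 4 * π ^ 4 + lam * ((k : ℕ+) : ℝ) ^ 2 * π ^ 2)
              - (-(j : ℝ) ^ 4 * π ^ 4 + lam * (j : ℝ) ^ 2 * π ^ 2) : ℝ) : ℂ)‖
            = ‖c k‖ / |a + (-((k : ℕ+) : ℝ) ^ 4 * π ^ 4 + lam * ((k : ℕ+) : ℝ) ^ 2 * π ^ 2)
              - (-(j : ℝ) ^ 4 * π ^ 4 + lam * (j : ℝ) ^ 2 * π ^ 2)| := by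
              rw [norm_div, Complex.norm_real, Real.norm_eq_abs]
          _ ≤ M / (|((((k:ℕ+):ℕ)):ℝ) - ((j:ℕ):ℝ)|
              * (((((k:ℕ+):ℕ)):ℝ) + ((j:ℕ):ℝ))^3) := by
              refine div_le_div₀ hM0 (hM k) hRpos ?_
              exact hlb
          _ = M * ((|((((k:ℕ+):ℕ)):ℝ) - ((j:ℕ):ℝ)|
              * (((((k:ℕ+):ℕ)):ℝ) + ((j:ℕ):ℝ))^3)⁻¹) := by
              rw [div_eq_mul_inv]
      refine stepA.trans ?_
      rw [← Finset.mul_sum]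
      refine mul_le_mul_of_nonneg_left ?_ hM0
      have himg : ∑ k ∈ t, ((|((((k:ℕ+):ℕ)):ℝ) - ((j:ℕ):ℝ)|
            * (((((k:ℕ+):ℕ)):ℝ) + ((j:ℕ):ℝ))^3)⁻¹)
          = ∑ n ∈ t.image (fun k : {k : ℕ+ // k ≠ j} => (((k:ℕ+)):ℕ)),
            ((|(n:ℝ) - ((j:ℕ):ℝ)| * ((n:ℝ) + ((j:ℕ):ℝ))^3)⁻¹) := by
        rw [Finset.sum_image]
        intro x _ y _ hxy
        have : (x:ℕ+) = (y:ℕ+) := PNat.coe_injective hxy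
        exact Subtype.ext this
      rw [himg]
      refine core_sum (j:ℕ) j.one_le _ ?_
      intro n hn
      simp only [Finset.mem_image] at hn
      obtain ⟨k, _, rfl⟩ := hn
      exact ⟨(k:ℕ+).property, by exact_mod_cast k.2⟩
    have hfinal : |a| * (M * (3 * (1 + Real.log ((j:ℕ):ℝ)) / ((j:ℕ):ℝ)^3))
        ≤ C * (1 + Real.log ((j:ℕ):ℝ)) / ((j:ℕ):ℝ) ^ 3 := by
      have h1 : |a| * (M * (3 * (1 + Real.log ((j:ℕ):ℝ)) / ((j:ℕ):ℝ)^3))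
          = (3 * |a| * M) * ((1 + Real.log ((j:ℕ):ℝ)) / ((j:ℕ):ℝ)^3) := by ring
      have h2 : C * (1 + Real.log ((j:ℕ):ℝ)) / ((j:ℕ):ℝ) ^ 3
          = C * ((1 + Real.log ((j:ℕ):ℝ)) / ((j:ℕ):ℝ)^3) := by ring
      rw [h1, h2]
      refine mul_le_mul_of_nonneg_right ?_ (by positivity)
      rw [hCdef]; nlinarith [ht1]
    calc ‖c j - 1‖ = |a| * ‖T‖ := hnorm1
      _ ≤ |a| * (M * (3 * (1 + Real.log ((j:ℕ):ℝ)) / ((j:ℕ):ℝ)^3)) := by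
          refine mul_le_mul_of_nonneg_left (hTle.trans hkey) (abs_nonneg a)
      _ ≤ C * (1 + Real.log ((j:ℕ):ℝ)) / ((j:ℕ):ℝ) ^ 3 := hfinal
  · -- small j
    push_neg at hbig
    have hcj : ‖c j - 1‖ ≤ M + 1 := by
      calc ‖c j - 1‖ ≤ ‖c j‖ + ‖(1:ℂ)‖ := norm_sub_le _ _
        _ ≤ M + 1 := by rw [norm_one]; exact add_le_add (hM j) le_rfl
    have hj3B : ((j:ℕ):ℝ)^3 ≤ B^3 := by
      refine pow_le_pow_left₀ (by positivity) (le_of_lt hbig) 3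
    have h1 : (M+1)*((j:ℕ):ℝ)^3 ≤ (M+1)*B^3 := mul_le_mul_of_nonneg_left hj3B (by linarith)
    have h2 : (M+1)*B^3 ≤ C := by rw [hCdef]; linarith
    have h3 : C ≤ C*(1 + Real.log ((j:ℕ):ℝ)) := le_mul_of_one_le_right (le_of_lt hC0) (by linarith)
    rw [div_eq_mul_inv, ← ge_iff_le]
    rw [ge_iff_le, ← div_eq_mul_inv, le_div_iff₀ hj3]
    calc ‖c j - 1‖ * ((j:ℕ):ℝ)^3 ≤ (M+1) * ((j:ℕ):ℝ)^3 := by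
          refine mul_le_mul_of_nonneg_right hcj (le_of_lt hj3)
      _ ≤ C*(1 + Real.log ((j:ℕ):ℝ)) := by linarith
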